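/- Premium formula: under exponential utility, deterministic interest rates (condition (R)) and the death-time filtration (condition (F)), for Z ∈ L^∞ with representation Z = ∑_{t=1}^T z_t 1_{(t−1 < τ ≤ t)} + z_{T+1} 1_{(T < τ)}, the indifference price is H(Z) = log h_0. -/

import Mathlib

open MeasureTheory Finset Real

noncomputable section

/-- `A(W)`: the set of admissible intertemporal allocations of the risk `W`:
adapted processes `(Y_t)_{t∈𝕋}` with each `Y_t` essentially bounded and
`∑_{t∈𝕋} Y_t/B_t = W` a.s. -/
def IsAlloc {Ω : Type*} [mΩ : MeasurableSpace Ω] (μ : Measure Ω) (T : ℕ)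
    (ℱ : ℕ → MeasurableSpace Ω) (B : ℕ → Ω → ℝ) (W : Ω → ℝ) (Y : ℕ → Ω → ℝ) : Prop :=
  (∀ t ∈ Finset.Icc 1 T, Measurable[ℱ t] (Y t) ∧ ∃ C : ℝ, ∀ᵐ ω ∂μ, |Y t ω| ≤ C) ∧
  ∀ᵐ ω ∂μ, ∑ t ∈ Finset.Icc 1 T, Y t ω / B t ω = W ω

/-- The integrated expected utility `∑_{t∈𝕋} E[u_t(Ỹ_t)]` of an allocation. -/
def allocVal {Ω : Type*} [mΩ : MeasurableSpace Ω] (μ : Measure Ω) (T : ℕ)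
    (u : ℕ → ℝ → ℝ) (B : ℕ → Ω → ℝ) (Y : ℕ → Ω → ℝ) : ℝ :=
  ∑ t ∈ Finset.Icc 1 T, ∫ ω, u t (Y t ω / B t ω) ∂μ

/-- The utility functional `U(W) = sup { ∑_t E[u_t(Ỹ_t)] : Y ∈ A(W) }`. -/
def Util {Ω : Type*} [mΩ : MeasurableSpace Ω] (μ : Measure Ω) (T : ℕ)
    (ℱ : ℕ → MeasurableSpace Ω) (u : ℕ → ℝ → ℝ) (B : ℕ → Ω → ℝ) (W : Ω → ℝ) : ℝ :=
  sSup {s : ℝ | ∃ Y, IsAlloc μ T ℱ B W Y ∧ s = allocVal μ T u B Y}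

lemma comap_nat_const {Ω : Type*} (g : Ω → ℕ) (f : Ω → ℝ)
    (hf : Measurable[MeasurableSpace.comap g ⊤] f) {ω ω' : Ω} (h : g ω = g ω') :
    f ω = f ω' := by
  have hs : MeasurableSet[MeasurableSpace.comap g ⊤] (f ⁻¹' {f ω}) :=
    hf (measurableSet_singleton _)
  obtain ⟨s, -, hs⟩ := hs
  have hω : ω ∈ g ⁻¹' s := by rw [hs]; exact rfl
  have hω' : ω' ∈ g ⁻¹' s := by simpa [Set.mem_preimage, ← h] using hω
  rw [hs] at hω'
  exact hω'.symm

lemma tangent_ineq {a x y : ℝ} (ha : 0 < a) :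
    (1/a) * (1 - Real.exp (-a*x)) ≤ (1/a) * (1 - Real.exp (-a*y)) + Real.exp (-a*y) * (x - y) := by
  have h1 : (-a*(x-y)) + 1 ≤ Real.exp (-a*(x-y)) := Real.add_one_le_exp _
  have h2 : Real.exp (-a*x) = Real.exp (-a*y) * Real.exp (-a*(x-y)) := by
    rw [← Real.exp_add]; ring_nf
  have h3 : 0 < Real.exp (-a*y) := Real.exp_pos _
  rw [h2]
  rw [div_mul_eq_mul_div, div_mul_eq_mul_div, div_add' _ _ _ (ne_of_gt ha), div_le_div_iff₀ ha ha]
  nlinarith [mul_le_mul_of_nonneg_left h1 h3.le]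

lemma integrable_of_ae_bound {Ω : Type*} [mΩ : MeasurableSpace Ω] {μ : Measure Ω}
    [IsFiniteMeasure μ] {f : Ω → ℝ} (hf : AEStronglyMeasurable f μ) {C : ℝ}
    (h : ∀ᵐ ω ∂μ, |f ω| ≤ C) : Integrable f μ :=
  Integrable.mono' (integrable_const C) hf (by simpa using h)

def Sc (T : ℕ) (a : ℝ) (ζ α β h : ℕ → ℝ) : ℕ → ℝ
  | 0 => 0
  | t+1 => Sc T a ζ α β h t +
      (if t+1 = T then a - ζ (T+1) - Sc T a ζ α β h t
       else β (t+2) * (a - Sc T a ζ α β h t - Real.log (h (t+1))) / (α (t+1) + β (t+2)))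

lemma Sc_succ (T : ℕ) (a : ℝ) (ζ α β h : ℕ → ℝ) (t : ℕ) :
    Sc T a ζ α β h (t+1) = Sc T a ζ α β h t +
      (if t+1 = T then a - ζ (T+1) - Sc T a ζ α β h t
       else β (t+2) * (a - Sc T a ζ α β h t - Real.log (h (t+1))) / (α (t+1) + β (t+2))) := rfl

lemma filter_range_eq_Icc (N s : ℕ) :
    (Finset.range (N+1)).filter (fun j => s ≤ j) = Finset.Icc s N := by
  ext j; simp [Finset.mem_Icc, Finset.mem_range]; omega

lemma integral_comp_nat {Ω : Type*} [mΩ : MeasurableSpace Ω] (μ : Measure Ω) [IsFiniteMeasure μ]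
    (φ : Ω → ℕ) (hφ : Measurable φ) (N : ℕ) (hN : ∀ ω, φ ω ≤ N) (F : ℕ → ℝ) :
    ∫ ω, F (φ ω) ∂μ = ∑ j ∈ Finset.range (N+1), (μ (φ ⁻¹' {j})).toReal * F j := by
  have hfe : (fun ω => F (φ ω)) =
      fun ω => ∑ j ∈ Finset.range (N+1), Set.indicator (φ ⁻¹' {j}) (fun _ => F j) ω := by
    funext ω
    rw [Finset.sum_eq_single (φ ω)]
    · simp [Set.indicator_of_mem, Set.mem_preimage]
    · intro b _ hb
      apply Set.indicator_of_notMem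
      simp [Set.mem_preimage]; exact fun hc => hb (hc ▸ rfl)
    · intro hc; exact absurd (Finset.mem_range.mpr (Nat.lt_succ_of_le (hN ω))) hc
  rw [hfe, integral_finset_sum]
  · refine Finset.sum_congr rfl fun j _ => ?_
    rw [integral_indicator_const _ (hφ (measurableSet_singleton j))]
    simp [mul_comm, measureReal_def]
  · intro j _
    exact (integrable_const (F j)).indicator (hφ (measurableSet_singleton j))


lemma setIntegral_comp_nat {Ω : Type*} [mΩ : MeasurableSpace Ω] (μ : Measure Ω)
    [IsFiniteMeasure μ] (φ : Ω → ℕ) (hφ : Measurable φ) (N : ℕ) (hN : ∀ ω, φ ω ≤ N)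
    (F : ℕ → ℝ) (s : ℕ) :
    ∫ ω in {ω | s ≤ φ ω}, F (φ ω) ∂μ = ∑ j ∈ Finset.Icc s N, (μ (φ ⁻¹' {j})).toReal * F j := by
  have hA : MeasurableSet {ω | s ≤ φ ω} := hφ (by trivial : MeasurableSet {j : ℕ | s ≤ j})
  rw [← integral_indicator hA]
  have : Set.indicator {ω | s ≤ φ ω} (fun ω => F (φ ω)) =
      fun ω => (if s ≤ φ ω then F (φ ω) else 0) := by
    funext ω; by_cases hh : s ≤ φ ω <;> simp [Set.indicator, hh]
  rw [this]
  rw [show (fun ω => (if s ≤ φ ω then F (φ ω) else 0)) =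
      (fun ω => (fun j => if s ≤ j then F j else 0) (φ ω)) from rfl]
  rw [integral_comp_nat μ φ hφ N hN (fun j => if s ≤ j then F j else 0)]
  rw [← filter_range_eq_Icc N s, Finset.sum_filter]
  refine Finset.sum_congr rfl fun j _ => ?_
  by_cases hh : s ≤ j <;> simp [hh]

def gq (T : ℕ) (a : ℝ) (ζ α β h : ℕ → ℝ) (t : ℕ) : ℝ :=
  if t = T then a - ζ (T+1) - Sc T a ζ α β h (t-1)
  else β (t+1) * (a - Sc T a ζ α β h (t-1) - Real.log (h t)) / (α t + β (t+1))

def Ee (T : ℕ) (a : ℝ) (ζ α β h : ℕ → ℝ) (t : ℕ) : ℝ :=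
  if t = T then Real.exp (-(α T) * gq T a ζ α β h T)
  else Real.exp (-(β (t+1)) * (a - Sc T a ζ α β h t)) * (h t) ^ (β (t+1))

def Mv (T : ℕ) (a : ℝ) (ζ α β h : ℕ → ℝ) (j : ℕ) : ℝ :=
  if j ≤ T then Real.exp (-(β j) * (a - ζ j - Sc T a ζ α β h (j-1)))
  else Ee T a ζ α β h T

lemma Sc_step (T : ℕ) (a : ℝ) (ζ α β h : ℕ → ℝ) (t : ℕ) (ht : 1 ≤ t) :
    Sc T a ζ α β h t = Sc T a ζ α β h (t-1) + gq T a ζ α β h t := by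
  obtain ⟨s, rfl⟩ : ∃ s, t = s + 1 := ⟨t - 1, by omega⟩
  simp only [Sc, gq, Nat.add_sub_cancel]

section Scalar
variable (T : ℕ) (a : ℝ) (ζ α β h q p : ℕ → ℝ)

lemma beta_pos (hT : 1 ≤ T) (hα : ∀ t ∈ Finset.Icc 1 T, 0 < α t)
    (hβ : ∀ t ∈ Finset.Icc 1 T, 1 / β t = ∑ k ∈ Finset.Icc t T, 1 / α k) :
    ∀ t ∈ Finset.Icc 1 T, 0 < β t := by
  intro t ht
  rw [Finset.mem_Icc] at ht
  have h1 : 0 < 1 / β t := by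
    rw [hβ t (Finset.mem_Icc.mpr ht)]
    refine Finset.sum_pos (fun k hk => ?_) ⟨t, Finset.mem_Icc.mpr ⟨le_refl t, ht.2⟩⟩
    rw [Finset.mem_Icc] at hk
    exact one_div_pos.mpr (hα k (Finset.mem_Icc.mpr ⟨le_trans ht.1 hk.1, hk.2⟩))
  exact one_div_pos.mp h1

lemma beta_rel (hα : ∀ t ∈ Finset.Icc 1 T, 0 < α t)
    (hβ : ∀ t ∈ Finset.Icc 1 T, 1 / β t = ∑ k ∈ Finset.Icc t T, 1 / α k) :
    ∀ t, 1 ≤ t → t < T → 1 / β t = 1 / α t + 1 / β (t+1) := by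
  intro t h1 h2
  rw [hβ t (Finset.mem_Icc.mpr ⟨h1, le_of_lt h2⟩),
    hβ (t+1) (Finset.mem_Icc.mpr ⟨by omega, by omega⟩)]
  rw [Finset.Icc_eq_cons_Ioc (by omega : t ≤ T), Finset.sum_cons]
  congr 1
  congr 1
  ext k; simp [Finset.mem_Icc, Finset.mem_Ioc]

lemma beta_T (hα : ∀ t ∈ Finset.Icc 1 T, 0 < α t) (hT : 1 ≤ T)
    (hβ : ∀ t ∈ Finset.Icc 1 T, 1 / β t = ∑ k ∈ Finset.Icc t T, 1 / α k) :
    β T = α T := by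
  have h1 := hβ T (Finset.mem_Icc.mpr ⟨hT, le_refl T⟩)
  rw [Finset.Icc_self, Finset.sum_singleton] at h1
  have hβT : 0 < β T := beta_pos T α β hT hα hβ T (Finset.mem_Icc.mpr ⟨hT, le_refl T⟩)
  have hαT : 0 < α T := hα T (Finset.mem_Icc.mpr ⟨hT, le_refl T⟩)
  field_simp at h1
  linarith

lemma h_pos (hT : 1 ≤ T) (hα : ∀ t ∈ Finset.Icc 1 T, 0 < α t)
    (hβ : ∀ t ∈ Finset.Icc 1 T, 1 / β t = ∑ k ∈ Finset.Icc t T, 1 / α k)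
    (hq0 : ∀ s, s < T → 0 ≤ q s) (hp0 : ∀ s, s < T → 0 ≤ p s)
    (hqp1 : ∀ s, s < T → q s + p s = 1)
    (hhT : h T = Real.exp (ζ (T+1)))
    (hhstep : ∀ t ∈ Finset.Icc 1 T,
      h (t - 1) = (Real.exp (β t * ζ t) * q (t - 1) + (h t) ^ (β t) * p (t - 1)) ^ (1 / β t)) :
    ∀ t, t ≤ T → 0 < h t := by
  have key : ∀ k, k ≤ T → 0 < h (T - k) := by
    intro k
    induction k with
    | zero => intro _; simpa [hhT] using Real.exp_pos (ζ (T+1))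
    | succ n ih =>
      intro hn
      have ht : T - n ≤ T := by omega
      have ihp : 0 < h (T - n) := ih (by omega)
      set t : ℕ := T - (n+1) with htdef
      have htn : t + 1 = T - n := by omega
      have ht1 : t + 1 ∈ Finset.Icc 1 T := Finset.mem_Icc.mpr ⟨by omega, by omega⟩
      have hstep := hhstep (t+1) ht1
      rw [Nat.add_sub_cancel] at hstep
      have htT : t < T := by omega
      have hβpos : 0 < β (t+1) := beta_pos T α β hT hα hβ (t+1) ht1
      have hX : 0 < Real.exp (β (t+1) * ζ (t+1)) * q t + (h (t+1)) ^ (β (t+1)) * p t := by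
        have he : 0 < Real.exp (β (t+1) * ζ (t+1)) := Real.exp_pos _
        have hh1 : 0 < (h (t+1)) ^ (β (t+1)) := Real.rpow_pos_of_pos (htn ▸ ihp) _
        by_cases hqz : q t = 0
        · have hp1 : p t = 1 := by have := hqp1 t htT; linarith
          rw [hqz, hp1]
          nlinarith
        · have hqpos : 0 < q t := lt_of_le_of_ne (hq0 t htT) (Ne.symm hqz)
          nlinarith [mul_pos he hqpos, mul_nonneg hh1.le (hp0 t htT)]
      rw [hstep]
      exact Real.rpow_pos_of_pos hX _
  intro t ht
  have := key (T - t) (by omega)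
  rwa [show T - (T - t) = t by omega] at this

end Scalar

section Scalar2
variable (T : ℕ) (a : ℝ) (ζ α β h q p : ℕ → ℝ)

lemma E_one (hT : 1 ≤ T) (hα : ∀ t ∈ Finset.Icc 1 T, 0 < α t)
    (hβ : ∀ t ∈ Finset.Icc 1 T, 1 / β t = ∑ k ∈ Finset.Icc t T, 1 / α k)
    (hhT : h T = Real.exp (ζ (T+1)))
    (hpos : ∀ t, t ≤ T → 0 < h t) :
    ∀ t, 1 ≤ t → t ≤ T → Real.exp (-(α t) * gq T a ζ α β h t) =
      Real.exp (-(β t) * (a - Sc T a ζ α β h (t-1))) * (h t) ^ (β t) := by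
  intro t h1 h2
  rw [Real.rpow_def_of_pos (hpos t h2), ← Real.exp_add]
  apply congrArg Real.exp
  rcases eq_or_lt_of_le h2 with heq | hlt
  · subst heq
    rw [gq, if_pos rfl, beta_T t α β hα h1 hβ, hhT, Real.log_exp]
    ring
  · rw [gq, if_neg (by omega)]
    have hrel := beta_rel T α β hα hβ t h1 hlt
    have hA : 0 < α t := hα t (Finset.mem_Icc.mpr ⟨h1, h2⟩)
    have hB : 0 < β (t+1) := beta_pos T α β hT hα hβ (t+1) (Finset.mem_Icc.mpr ⟨by omega, by omega⟩)
    have hC : 0 < β t := beta_pos T α β hT hα hβ t (Finset.mem_Icc.mpr ⟨h1, h2⟩)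
    have hAB : α t + β (t+1) ≠ 0 := by positivity
    have hCrel : β t * (α t + β (t+1)) = α t * β (t+1) := by
      field_simp at hrel
      linarith
    field_simp
    linear_combination (a - Sc T a ζ α β h (t-1) - Real.log (h t)) * hCrel

lemma E_form (hT : 1 ≤ T) (hα : ∀ t ∈ Finset.Icc 1 T, 0 < α t)
    (hβ : ∀ t ∈ Finset.Icc 1 T, 1 / β t = ∑ k ∈ Finset.Icc t T, 1 / α k)
    (hhT : h T = Real.exp (ζ (T+1)))
    (hpos : ∀ t, t ≤ T → 0 < h t) :
    ∀ t, 1 ≤ t → t ≤ T → Ee T a ζ α β h t =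
      Real.exp (-(β t) * (a - Sc T a ζ α β h (t-1))) * (h t) ^ (β t) := by
  intro t h1 h2
  rcases eq_or_lt_of_le h2 with heq | hlt
  · simp only [Ee, if_pos heq]
    rw [heq]
    exact E_one T a ζ α β h hT hα hβ hhT hpos T hT le_rfl
  · rw [Ee, if_neg (by omega)]
    rw [Real.rpow_def_of_pos (hpos t h2), Real.rpow_def_of_pos (hpos t h2),
      ← Real.exp_add, ← Real.exp_add]
    apply congrArg Real.exp
    rw [Sc_step T a ζ α β h t h1, gq, if_neg (by omega)]
    have hrel := beta_rel T α β hα hβ t h1 hlt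
    have hA : 0 < α t := hα t (Finset.mem_Icc.mpr ⟨h1, h2⟩)
    have hB : 0 < β (t+1) := beta_pos T α β hT hα hβ (t+1) (Finset.mem_Icc.mpr ⟨by omega, by omega⟩)
    have hC : 0 < β t := beta_pos T α β hT hα hβ t (Finset.mem_Icc.mpr ⟨h1, h2⟩)
    have hAB : α t + β (t+1) ≠ 0 := by positivity
    have hCrel : β t * (α t + β (t+1)) = α t * β (t+1) := by
      field_simp at hrel
      linarith
    field_simp
    linear_combination (a - Sc T a ζ α β h (t-1) - Real.log (h t)) * hCrel

lemma E_gt (hT : 1 ≤ T) (hα : ∀ t ∈ Finset.Icc 1 T, 0 < α t)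
    (hβ : ∀ t ∈ Finset.Icc 1 T, 1 / β t = ∑ k ∈ Finset.Icc t T, 1 / α k)
    (hhT : h T = Real.exp (ζ (T+1)))
    (hpos : ∀ t, t ≤ T → 0 < h t) :
    ∀ t, 1 ≤ t → t ≤ T → Real.exp (-(α t) * gq T a ζ α β h t) = Ee T a ζ α β h t :=
  fun t h1 h2 => (E_one T a ζ α β h hT hα hβ hhT hpos t h1 h2).trans
    (E_form T a ζ α β h hT hα hβ hhT hpos t h1 h2).symm

lemma E_rec (hT : 1 ≤ T) (hα : ∀ t ∈ Finset.Icc 1 T, 0 < α t)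
    (hβ : ∀ t ∈ Finset.Icc 1 T, 1 / β t = ∑ k ∈ Finset.Icc t T, 1 / α k)
    (hq0 : ∀ s, s < T → 0 ≤ q s) (hp0 : ∀ s, s < T → 0 ≤ p s)
    (hhT : h T = Real.exp (ζ (T+1)))
    (hpos : ∀ t, t ≤ T → 0 < h t)
    (hhstep : ∀ t ∈ Finset.Icc 1 T,
      h (t - 1) = (Real.exp (β t * ζ t) * q (t - 1) + (h t) ^ (β t) * p (t - 1)) ^ (1 / β t)) :
    ∀ t, 1 ≤ t → t ≤ T → Ee T a ζ α β h (t-1) =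
      Mv T a ζ α β h t * q (t-1) + Ee T a ζ α β h t * p (t-1) := by
  intro t h1 h2
  have hβt : 0 < β t := beta_pos T α β hT hα hβ t (Finset.mem_Icc.mpr ⟨h1, h2⟩)
  have hbase : 0 ≤ Real.exp (β t * ζ t) * q (t-1) + (h t) ^ (β t) * p (t-1) := by
    have := hq0 (t-1) (by omega)
    have := hp0 (t-1) (by omega)
    have h3 : (0:ℝ) ≤ (h t) ^ (β t) := Real.rpow_nonneg (hpos t h2).le _
    positivity
  have hpow : (h (t-1)) ^ (β t) =
      Real.exp (β t * ζ t) * q (t-1) + (h t) ^ (β t) * p (t-1) := by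
    rw [hhstep t (Finset.mem_Icc.mpr ⟨h1, h2⟩), one_div, Real.rpow_inv_rpow hbase hβt.ne']
  have hEt1 : Ee T a ζ α β h (t-1) =
      Real.exp (-(β t) * (a - Sc T a ζ α β h (t-1))) * (h (t-1)) ^ (β t) := by
    rw [Ee, if_neg (by omega)]
    rw [show t - 1 + 1 = t by omega]
  rw [hEt1, hpow, Mv, if_pos h2,
    E_form T a ζ α β h hT hα hβ hhT hpos t h1 h2]
  rw [show -(β t) * (a - ζ t - Sc T a ζ α β h (t-1)) =
    (-(β t) * (a - Sc T a ζ α β h (t-1))) + β t * ζ t by ring, Real.exp_add]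
  ring

lemma S_sum : ∀ t, ∑ s ∈ Finset.Icc 1 t, gq T a ζ α β h s = Sc T a ζ α β h t := by
  intro t
  induction t with
  | zero => simp [Sc]
  | succ n ih =>
    rw [Finset.sum_Icc_succ_top (by omega : 1 ≤ n + 1), ih,
      Sc_step T a ζ α β h (n+1) (by omega), Nat.add_sub_cancel]

end Scalar2

lemma sum_Xval (T : ℕ) (a : ℝ) (ζ α β h : ℕ → ℝ) (hT : 1 ≤ T)
    (hα : ∀ t ∈ Finset.Icc 1 T, 0 < α t)
    (hβ : ∀ t ∈ Finset.Icc 1 T, 1 / β t = ∑ k ∈ Finset.Icc t T, 1 / α k) :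
    ∀ j, 1 ≤ j → j ≤ T + 1 →
      ∑ t ∈ Finset.Icc 1 T, (if j ≤ t then (β j / α t) * (a - ζ j - Sc T a ζ α β h (j-1))
        else gq T a ζ α β h t) = a - ζ j := by
  intro j h1 h2
  rcases Nat.lt_or_ge T j with hj | hj
  · -- j = T + 1 : all terms are gq
    have hjT : j = T + 1 := by omega
    have : ∀ t ∈ Finset.Icc 1 T, (if j ≤ t then (β j / α t) * (a - ζ j - Sc T a ζ α β h (j-1))
        else gq T a ζ α β h t) = gq T a ζ α β h t := by
      intro t ht
      rw [Finset.mem_Icc] at ht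
      rw [if_neg (by omega)]
    rw [Finset.sum_congr rfl this, S_sum]
    rw [Sc_step T a ζ α β h T hT, gq, if_pos rfl, hjT]
    ring
  · -- 1 ≤ j ≤ T
    have hsplit : ∑ t ∈ Finset.Ioc 0 (j-1), (if j ≤ t then (β j / α t) * (a - ζ j - Sc T a ζ α β h (j-1))
          else gq T a ζ α β h t)
        + ∑ t ∈ Finset.Ioc (j-1) T, (if j ≤ t then (β j / α t) * (a - ζ j - Sc T a ζ α β h (j-1))
          else gq T a ζ α β h t)
        = ∑ t ∈ Finset.Ioc 0 T, (if j ≤ t then (β j / α t) * (a - ζ j - Sc T a ζ α β h (j-1))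
          else gq T a ζ α β h t) :=
      Finset.sum_Ioc_consecutive _ (by omega) (by omega)
    have hIcc : Finset.Icc 1 T = Finset.Ioc 0 T := by ext k; simp [Finset.mem_Icc, Finset.mem_Ioc]; omega
    rw [hIcc, ← hsplit]
    have e1 : ∑ t ∈ Finset.Ioc 0 (j-1), (if j ≤ t then (β j / α t) * (a - ζ j - Sc T a ζ α β h (j-1))
        else gq T a ζ α β h t) = Sc T a ζ α β h (j-1) := by
      rw [show Finset.Ioc 0 (j-1) = Finset.Icc 1 (j-1) by
        ext k; simp [Finset.mem_Icc, Finset.mem_Ioc]; omega]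
      rw [← S_sum T a ζ α β h (j-1)]
      apply Finset.sum_congr rfl
      intro t ht
      rw [Finset.mem_Icc] at ht
      rw [if_neg (by omega)]
    have e2 : ∑ t ∈ Finset.Ioc (j-1) T, (if j ≤ t then (β j / α t) * (a - ζ j - Sc T a ζ α β h (j-1))
        else gq T a ζ α β h t) = a - ζ j - Sc T a ζ α β h (j-1) := by
      have e2a : ∑ t ∈ Finset.Ioc (j-1) T, (if j ≤ t then (β j / α t) * (a - ζ j - Sc T a ζ α β h (j-1))
          else gq T a ζ α β h t)
          = ∑ t ∈ Finset.Icc j T, (β j * (a - ζ j - Sc T a ζ α β h (j-1))) * (1 / α t) := by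
        rw [show Finset.Ioc (j-1) T = Finset.Icc j T by
          ext k; simp [Finset.mem_Icc, Finset.mem_Ioc]; omega]
        apply Finset.sum_congr rfl
        intro t ht
        rw [Finset.mem_Icc] at ht
        rw [if_pos (by omega)]
        ring
      rw [e2a, ← Finset.mul_sum, ← hβ j (Finset.mem_Icc.mpr ⟨h1, hj⟩)]
      have hβj : 0 < β j := beta_pos T α β hT hα hβ j (Finset.mem_Icc.mpr ⟨h1, hj⟩)
      field_simp
    rw [e1, e2]; ring

def phif {Ω : Type*} (T : ℕ) (τ : Ω → ℝ) (ω : Ω) : ℕ :=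
  if (T:ℝ) < τ ω then T+1 else ⌈τ ω⌉₊

section Phi
variable {Ω : Type*} (T : ℕ) (τ : Ω → ℝ)

lemma phif_range (hτpos : ∀ ω, 0 < τ ω) : ∀ ω, 1 ≤ phif T τ ω ∧ phif T τ ω ≤ T + 1 := by
  intro ω
  unfold phif
  by_cases hc : (T:ℝ) < τ ω
  · simp [hc]
  · rw [if_neg hc]
    constructor
    · exact Nat.one_le_ceil_iff.mpr (hτpos ω)
    · have : τ ω ≤ (T:ℝ) := not_lt.mp hc
      have := Nat.ceil_le.mpr this
      omega

lemma phif_eq_iff (hτpos : ∀ ω, 0 < τ ω) (j : ℕ) (h1 : 1 ≤ j) (h2 : j ≤ T) (ω : Ω) :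
    phif T τ ω = j ↔ ((j:ℝ) - 1 < τ ω ∧ τ ω ≤ (j:ℝ)) := by
  unfold phif
  by_cases hc : (T:ℝ) < τ ω
  · rw [if_pos hc]
    constructor
    · intro hh; omega
    · intro ⟨_, hh⟩
      exact absurd (hh.trans (by exact_mod_cast Nat.cast_le.mpr h2)) (not_le.mpr hc)
  · rw [if_neg hc]
    rw [Nat.ceil_eq_iff (by omega)]
    have : ((j - 1 : ℕ) : ℝ) = (j:ℝ) - 1 := by
      have := Nat.cast_sub h1 (R := ℝ)
      simpa using this
    rw [this]

lemma phif_eq_top_iff (ω : Ω) : phif T τ ω = T + 1 ↔ (T:ℝ) < τ ω := by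
  unfold phif
  by_cases hc : (T:ℝ) < τ ω
  · simp [hc]
  · rw [if_neg hc]
    have := Nat.ceil_le.mpr (not_lt.mp hc)
    constructor
    · intro hh; omega
    · intro hh; exact absurd hh hc

lemma phif_gt_iff (t : ℕ) (ht : t ≤ T) (ω : Ω) :
    t + 1 ≤ phif T τ ω ↔ (t:ℝ) < τ ω := by
  unfold phif
  by_cases hc : (T:ℝ) < τ ω
  · rw [if_pos hc]
    constructor
    · intro _; calc (t:ℝ) ≤ T := by exact_mod_cast ht
        _ < τ ω := hc
    · intro _; omega
  · rw [if_neg hc]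
    constructor
    · intro hh
      by_contra hcon
      exact absurd (Nat.ceil_le.mpr (not_lt.mp hcon)) (by omega)
    · intro hh
      have : ¬ (⌈τ ω⌉₊ ≤ t) := fun hcc => absurd (le_trans (Nat.le_ceil _) (by exact_mod_cast hcc)) (not_le.mpr hh)
      omega

lemma phif_meas [MeasurableSpace Ω] (hτmeas : Measurable τ) : Measurable (phif T τ) := by
  unfold phif
  refine Measurable.ite ?_ measurable_const ?_
  · exact measurableSet_lt measurable_const hτmeas
  · exact Nat.measurable_ceil.comp hτmeas

section Filt
variable {Ω : Type*} [mΩ : MeasurableSpace Ω] (T : ℕ) (τ : Ω → ℝ)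
  (D : ℕ → Ω → ℝ) (ℋ : ℕ → MeasurableSpace Ω)

lemma filt_le (hτmeas : Measurable τ)
    (hD : ∀ t ω, D t ω = if τ ω ≤ (t : ℝ) then 1 else 0)
    (hℋ : ∀ t, ℋ t = ⨆ s ∈ Finset.range (t + 1),
      MeasurableSpace.comap (D s) (inferInstance : MeasurableSpace ℝ)) :
    ∀ t, ℋ t ≤ mΩ := by
  intro t
  rw [hℋ t]
  refine iSup₂_le fun s _ => ?_
  rw [← measurable_iff_comap_le]
  have : D s = fun ω => if τ ω ≤ (s : ℝ) then 1 else 0 := funext (hD s)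
  rw [this]
  exact Measurable.ite (measurableSet_le hτmeas measurable_const)
    measurable_const measurable_const

lemma Dset_mem (hD : ∀ t ω, D t ω = if τ ω ≤ (t : ℝ) then 1 else 0)
    (hℋ : ∀ t, ℋ t = ⨆ s ∈ Finset.range (t + 1),
      MeasurableSpace.comap (D s) (inferInstance : MeasurableSpace ℝ)) :
    ∀ t s, s ≤ t → MeasurableSet[ℋ t] {ω | τ ω ≤ (s:ℝ)} := by
  intro t s hs
  have h1 : {ω | τ ω ≤ (s:ℝ)} = D s ⁻¹' {1} := by
    ext ω
    simp only [Set.mem_setOf_eq, Set.mem_preimage, Set.mem_singleton_iff, hD s ω]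
    by_cases hc : τ ω ≤ (s:ℝ) <;> simp [hc]
  have h2 : MeasurableSet[MeasurableSpace.comap (D s) (inferInstance : MeasurableSpace ℝ)]
      (D s ⁻¹' {1}) := ⟨{1}, measurableSet_singleton 1, rfl⟩
  have h3 : MeasurableSpace.comap (D s) (inferInstance : MeasurableSpace ℝ) ≤ ℋ t := by
    rw [hℋ t]
    exact le_iSup₂ (f := fun (s : ℕ) (_ : s ∈ Finset.range (t+1)) =>
      MeasurableSpace.comap (D s) (inferInstance : MeasurableSpace ℝ)) s
      (Finset.mem_range.mpr (by omega))
  rw [h1]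
  exact h3 _ h2

lemma phit_meas (hτpos : ∀ ω, 0 < τ ω)
    (hD : ∀ t ω, D t ω = if τ ω ≤ (t : ℝ) then 1 else 0)
    (hℋ : ∀ t, ℋ t = ⨆ s ∈ Finset.range (t + 1),
      MeasurableSpace.comap (D s) (inferInstance : MeasurableSpace ℝ)) :
    ∀ t, t ≤ T → Measurable[ℋ t] (fun ω => min (phif T τ ω) (t+1)) := by
  intro t ht
  refine @measurable_to_countable' ℕ Ω _ _ (ℋ t) _ ?_
  intro j
  by_cases hj0 : j = 0
  · have : (fun ω => min (phif T τ ω) (t+1)) ⁻¹' {j} = ∅ := by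
      ext ω
      have := phif_range T τ hτpos ω
      simp only [Set.mem_preimage, Set.mem_singleton_iff, Set.mem_empty_iff_false, iff_false]
      omega
    rw [this]; exact @MeasurableSet.empty _ (ℋ t)
  by_cases hjbig : t + 1 < j
  · have : (fun ω => min (phif T τ ω) (t+1)) ⁻¹' {j} = ∅ := by
      ext ω
      simp only [Set.mem_preimage, Set.mem_singleton_iff, Set.mem_empty_iff_false, iff_false]
      omega
    rw [this]; exact @MeasurableSet.empty _ (ℋ t)
  by_cases hjtop : j = t + 1
  · have : (fun ω => min (phif T τ ω) (t+1)) ⁻¹' {j} = {ω | τ ω ≤ (t:ℝ)}ᶜ := by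
      ext ω
      have hr := phif_range T τ hτpos ω
      have hgt := phif_gt_iff T τ t ht ω
      simp only [Set.mem_preimage, Set.mem_singleton_iff, Set.mem_compl_iff,
        Set.mem_setOf_eq, not_le, hjtop]
      rw [← hgt]
      omega
    rw [this]
    exact (Dset_mem τ D ℋ hD hℋ t t le_rfl).compl
  · -- 1 ≤ j ≤ t
    have hj1 : 1 ≤ j := by omega
    have hjt : j ≤ t := by omega
    have : (fun ω => min (phif T τ ω) (t+1)) ⁻¹' {j}
        = {ω | τ ω ≤ (j:ℝ)} ∩ {ω | τ ω ≤ ((j-1 : ℕ):ℝ)}ᶜ := by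
      ext ω
      have heq := phif_eq_iff T τ hτpos j hj1 (by omega) ω
      have hcast : ((j - 1 : ℕ) : ℝ) = (j:ℝ) - 1 := by
        have := Nat.cast_sub hj1 (R := ℝ); simpa using this
      simp only [Set.mem_preimage, Set.mem_singleton_iff, Set.mem_inter_iff,
        Set.mem_setOf_eq, Set.mem_compl_iff, not_le, hcast]
      constructor
      · intro hh
        have : phif T τ ω = j := by omega
        have := heq.mp this
        exact ⟨this.2, this.1⟩
      · intro ⟨ha, hb⟩
        have : phif T τ ω = j := heq.mpr ⟨hb, ha⟩
        omega
    rw [this]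
    exact (Dset_mem τ D ℋ hD hℋ t j hjt).inter
      (Dset_mem τ D ℋ hD hℋ t (j-1) (by omega)).compl

lemma filt_le_comap (hτpos : ∀ ω, 0 < τ ω) (hτmeas : Measurable τ)
    (hD : ∀ t ω, D t ω = if τ ω ≤ (t : ℝ) then 1 else 0)
    (hℋ : ∀ t, ℋ t = ⨆ s ∈ Finset.range (t + 1),
      MeasurableSpace.comap (D s) (inferInstance : MeasurableSpace ℝ)) :
    ∀ t, t ≤ T → ℋ t ≤ MeasurableSpace.comap (fun ω => min (phif T τ ω) (t+1)) ⊤ := by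
  intro t ht
  rw [hℋ t]
  refine iSup₂_le fun s hs => ?_
  rw [Finset.mem_range] at hs
  have hkey : D s = (fun j => if j ≤ s then (1:ℝ) else 0) ∘ (fun ω => min (phif T τ ω) (t+1)) := by
    funext ω
    have hiff : min (phif T τ ω) (t+1) ≤ s ↔ τ ω ≤ (s:ℝ) := by
      have hgt := phif_gt_iff T τ s (by omega) ω
      constructor
      · intro hh
        by_contra hcon
        have : s + 1 ≤ phif T τ ω := hgt.mpr (not_le.mp hcon)
        omega
      · intro hh
        have : ¬ (s + 1 ≤ phif T τ ω) := fun hc => absurd (hgt.mp hc) (not_lt.mpr hh)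
        omega
    simp only [hD s ω, Function.comp_apply]
    by_cases hc : τ ω ≤ (s:ℝ)
    · rw [if_pos hc, if_pos (hiff.mpr hc)]
    · rw [if_neg hc, if_neg (fun hc2 => hc (hiff.mp hc2))]
  rw [hkey, ← MeasurableSpace.comap_comp]
  exact MeasurableSpace.comap_mono le_top

end Filt
end Phi

lemma utilFormula {Ω : Type*} [mΩ : MeasurableSpace Ω] (μ : Measure Ω) [IsProbabilityMeasure μ]
    (T : ℕ) (hT : 1 ≤ T)
    (τ : Ω → ℝ) (hτmeas : Measurable τ) (hτpos : ∀ ω, 0 < τ ω)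
    (D : ℕ → Ω → ℝ) (hD : ∀ t ω, D t ω = if τ ω ≤ (t : ℝ) then 1 else 0)
    (ℋ : ℕ → MeasurableSpace Ω)
    (hℋ : ∀ t, ℋ t =
      ⨆ s ∈ Finset.range (t + 1), MeasurableSpace.comap (D s) (inferInstance : MeasurableSpace ℝ))
    (q p : ℕ → ℝ)
    (hsurv : ∀ t, t < T → 0 < μ {ω | (t : ℝ) < τ ω})
    (hq : ∀ t, t < T → q t =
      (μ {ω | (t : ℝ) < τ ω ∧ τ ω ≤ (t : ℝ) + 1}).toReal / (μ {ω | (t : ℝ) < τ ω}).toReal)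
    (hp : ∀ t, t < T → p t = 1 - q t)
    (α β : ℕ → ℝ) (hα : ∀ t ∈ Finset.Icc 1 T, 0 < α t)
    (hβ : ∀ t ∈ Finset.Icc 1 T, 1 / β t = ∑ k ∈ Finset.Icc t T, 1 / α k)
    (B : ℕ → ℝ) (hBpos : ∀ t ∈ Finset.Icc 1 T, 0 < B t)
    (u : ℕ → ℝ → ℝ)
    (hu : ∀ t x, u t x = (1 / α t) * (1 - Real.exp (-(α t) * x)))
    (ζ : ℕ → ℝ) (Zf : Ω → ℝ)
    (hZf : ∀ ω, Zf ω =
      (∑ t ∈ Finset.Icc 1 T, if (t : ℝ) - 1 < τ ω ∧ τ ω ≤ (t : ℝ) then ζ t else 0) +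
      (if (T : ℝ) < τ ω then ζ (T + 1) else 0))
    (h : ℕ → ℝ)
    (hhT : h T = Real.exp (ζ (T + 1)))
    (hhstep : ∀ t ∈ Finset.Icc 1 T,
      h (t - 1) = (Real.exp (β t * ζ t) * q (t - 1) + (h t) ^ (β t) * p (t - 1)) ^ (1 / β t))
    (a : ℝ) :
    Util μ T ℋ u (fun t _ => B t) (fun ω => a - Zf ω) =
      (1 / β 1) * (1 - Ee T a ζ α β h 0) := by
  -- basic scalar facts
  have hq0 : ∀ s, s < T → 0 ≤ q s := by
    intro s hs; rw [hq s hs]; positivity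
  have hqle : ∀ s, s < T → q s ≤ 1 := by
    intro s hs
    rw [hq s hs]
    have hmono : μ {ω | (s : ℝ) < τ ω ∧ τ ω ≤ (s : ℝ) + 1} ≤ μ {ω | (s : ℝ) < τ ω} :=
      measure_mono (fun ω hω => hω.1)
    have hpos0 : 0 < (μ {ω | (s : ℝ) < τ ω}).toReal :=
      ENNReal.toReal_pos (hsurv s hs).ne' (measure_ne_top μ _)
    rw [div_le_one hpos0]
    exact ENNReal.toReal_mono (measure_ne_top μ _) hmono
  have hp0 : ∀ s, s < T → 0 ≤ p s := by
    intro s hs; rw [hp s hs]; linarith [hqle s hs]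
  have hqp1 : ∀ s, s < T → q s + p s = 1 := by
    intro s hs; rw [hp s hs]; ring
  have hposT : ∀ t, t ≤ T → 0 < h t := h_pos T ζ α β h q p hT hα hβ hq0 hp0 hqp1 hhT hhstep
  -- the death-index map
  set φ : Ω → ℕ := phif T τ with hφdef
  have hφr : ∀ ω, 1 ≤ φ ω ∧ φ ω ≤ T + 1 := phif_range T τ hτpos
  have hφm : Measurable φ := phif_meas T τ hτmeas
  have hfib : ∀ j, MeasurableSet (φ ⁻¹' {j}) := fun j => hφm (measurableSet_singleton j)
  set m : ℕ → ℝ := fun j => (μ (φ ⁻¹' {j})).toReal with hmdef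
  have hm0 : ∀ j, 0 ≤ m j := fun j => ENNReal.toReal_nonneg
  set MG : ℕ → ℝ := fun t => ∑ j ∈ Finset.Icc (t+1) (T+1), m j with hMGdef
  have hMGset : ∀ t, {ω | t + 1 ≤ φ ω} = ⋃ j ∈ Finset.Icc (t+1) (T+1), φ ⁻¹' {j} := by
    intro t
    ext ω
    simp only [Set.mem_setOf_eq, Set.mem_iUnion, Finset.mem_Icc, Set.mem_preimage,
      Set.mem_singleton_iff]
    constructor
    · intro hh; exact ⟨φ ω, ⟨hh, (hφr ω).2⟩, rfl⟩
    · rintro ⟨j, ⟨hj1, _⟩, rfl⟩; omega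
  have hMGmeas : ∀ t : ℕ, MeasurableSet {ω | t + 1 ≤ φ ω} := by
    intro t
    rw [hMGset t]
    exact MeasurableSet.biUnion (Finset.Icc (t+1) (T+1)).countable_toSet (fun j _ => hfib j)
  have hMG : ∀ t, (μ {ω | t + 1 ≤ φ ω}).toReal = MG t := by
    intro t
    rw [hMGset t, measure_biUnion_finset ?_ (fun j _ => hfib j)]
    · exact ENNReal.toReal_sum (fun j _ => measure_ne_top μ _)
    · intro i _ j _ hij
      simp only [Function.onFun]
      apply Set.disjoint_left.mpr
      intro ω hωi hωj
      simp only [Set.mem_preimage, Set.mem_singleton_iff] at hωi hωj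
      exact hij (hωi ▸ hωj ▸ rfl)
  have hMG0 : MG 0 = 1 := by
    have huniv : {ω | 0 + 1 ≤ φ ω} = Set.univ := by
      ext ω; simpa using (hφr ω).1
    rw [← hMG 0, huniv, measure_univ, ENNReal.toReal_one]
  -- identification of survival sets
  have hGid : ∀ t, t ≤ T → {ω | (t : ℝ) < τ ω} = {ω | t + 1 ≤ φ ω} := by
    intro t ht
    ext ω
    exact (phif_gt_iff T τ t ht ω).symm
  have hfibid : ∀ j, 1 ≤ j → j ≤ T →
      {ω | ((j:ℝ) - 1) < τ ω ∧ τ ω ≤ (j:ℝ)} = φ ⁻¹' {j} := by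
    intro j h1 h2
    ext ω
    exact (phif_eq_iff T τ hτpos j h1 h2 ω).symm
  have hMGpos : ∀ t, t < T → 0 < MG t := by
    intro t ht
    rw [← hMG t, ← hGid t (le_of_lt ht)]
    exact ENNReal.toReal_pos (hsurv t ht).ne' (measure_ne_top μ _)
  have hm_q : ∀ t, 1 ≤ t → t ≤ T → m t = q (t-1) * MG (t-1) := by
    intro t h1 h2
    have hlt : t - 1 < T := by omega
    have hcast : ((t - 1 : ℕ) : ℝ) = (t : ℝ) - 1 := by
      have := Nat.cast_sub h1 (R := ℝ); simpa using this
    have hqv := hq (t-1) hlt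
    rw [hcast] at hqv
    rw [show (t:ℝ) - 1 + 1 = (t:ℝ) by ring] at hqv
    rw [hfibid t h1 h2] at hqv
    have hGv : {ω | (t:ℝ) - 1 < τ ω} = {ω | (t-1) + 1 ≤ φ ω} := by
      have := hGid (t-1) (by omega)
      rw [hcast] at this
      exact this
    rw [hGv] at hqv
    rw [hqv, hMG]
    have : 0 < MG (t-1) := hMGpos (t-1) hlt
    field_simp
    rfl
  have hMG_split : ∀ t, 1 ≤ t → t ≤ T → MG (t-1) = m t + MG t := by
    intro t h1 h2
    have : Finset.Icc ((t-1)+1) (T+1) = insert t (Finset.Icc (t+1) (T+1)) := by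
      ext k; simp [Finset.mem_Icc, Finset.mem_insert]; omega
    rw [hMGdef]
    simp only
    rw [this, Finset.sum_insert (by simp only [Finset.mem_Icc]; omega)]
  have hMG_p : ∀ t, 1 ≤ t → t ≤ T → MG t = p (t-1) * MG (t-1) := by
    intro t h1 h2
    have hlt : t - 1 < T := by omega
    rw [hp (t-1) hlt]
    have := hMG_split t h1 h2
    have := hm_q t h1 h2
    ring_nf
    linarith [hMG_split t h1 h2, hm_q t h1 h2]
  -- the key martingale identity
  have KI : ∀ k, k ≤ T → ∑ j ∈ Finset.Icc (T-k+1) (T+1), m j * Mv T a ζ α β h j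
      = Ee T a ζ α β h (T-k) * MG (T-k) := by
    intro k
    induction k with
    | zero =>
      intro _
      simp only [Nat.sub_zero]
      rw [Finset.Icc_self, Finset.sum_singleton]
      have hMv : Mv T a ζ α β h (T+1) = Ee T a ζ α β h T := by
        rw [Mv, if_neg (by omega)]
      rw [hMv, hMGdef]
      simp only
      rw [Finset.Icc_self, Finset.sum_singleton]
      ring
    | succ n ih =>
      intro hn
      have ihv := ih (by omega)
      set t : ℕ := T - (n+1) with htdef
      have ht1 : T - n = t + 1 := by omega
      rw [ht1] at ihv
      have hsplit : Finset.Icc (t+1) (T+1) = insert (t+1) (Finset.Icc (t+2) (T+1)) := by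
        ext k; simp [Finset.mem_Icc, Finset.mem_insert]; omega
      rw [hsplit, Finset.sum_insert (by simp only [Finset.mem_Icc]; omega)]
      rw [show t + 2 = (t+1) + 1 by ring] at *
      rw [ihv]
      have hrec := E_rec T a ζ α β h q p hT hα hβ hq0 hp0 hhT hposT hhstep (t+1)
        (by omega) (by omega)
      rw [Nat.add_sub_cancel] at hrec
      have hmq := hm_q (t+1) (by omega) (by omega)
      rw [Nat.add_sub_cancel] at hmq
      have hmp := hMG_p (t+1) (by omega) (by omega)
      rw [Nat.add_sub_cancel] at hmp
      rw [hmq, hmp, hrec]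
      ring
  have KI0 : ∑ j ∈ Finset.Icc 1 (T+1), m j * Mv T a ζ α β h j = Ee T a ζ α β h 0 := by
    have := KI T le_rfl
    rw [Nat.sub_self] at this
    rw [show (0:ℕ) + 1 = 1 from rfl] at this
    rw [this, hMG0, mul_one]
  -- toolbox
  have hboundφ : ∀ F : ℕ → ℝ, ∀ ω, |F (φ ω)| ≤ ∑ j ∈ Finset.range (T+2), |F j| := by
    intro F ω
    exact Finset.single_le_sum (f := fun j => |F j|) (fun i _ => abs_nonneg _)
      (Finset.mem_range.mpr (by have := (hφr ω).2; omega))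
  have hφcomp_meas : ∀ F : ℕ → ℝ, Measurable (fun ω => F (φ ω)) :=
    fun F => (measurable_from_top (f := F)).comp hφm
  have hint_comp : ∀ F : ℕ → ℝ, Integrable (fun ω => F (φ ω)) μ := fun F =>
    integrable_of_ae_bound (hφcomp_meas F).aestronglyMeasurable (ae_of_all μ (hboundφ F))
  have hint_comp_mul : ∀ (F : ℕ → ℝ) (g : Ω → ℝ), Measurable g → ∀ C : ℝ,
      (∀ᵐ ω ∂μ, |g ω| ≤ C) → Integrable (fun ω => F (φ ω) * g ω) μ := by
    intro F g hg C hC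
    refine integrable_of_ae_bound ((hφcomp_meas F).mul hg).aestronglyMeasurable
      (C := (∑ j ∈ Finset.range (T+2), |F j|) * C) ?_
    filter_upwards [hC] with ω hω
    rw [abs_mul]
    exact mul_le_mul (hboundφ F ω) hω (abs_nonneg _) (le_trans (abs_nonneg _) (hboundφ F ω))
  -- the candidate optimal allocation (in discounted units)
  set Xs : ℕ → Ω → ℝ := fun t ω => if φ ω ≤ t then
      (β (φ ω) / α t) * (a - ζ (φ ω) - Sc T a ζ α β h (φ ω - 1)) else gq T a ζ α β h t with hXsdef
  set Lf : ℕ → Ω → ℝ := fun t ω => if φ ω ≤ t then Mv T a ζ α β h (φ ω)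
      else Ee T a ζ α β h t with hLfdef
  set Mf : Ω → ℝ := fun ω => Mv T a ζ α β h (φ ω) with hMfdef
  have hXsLf : ∀ t, 1 ≤ t → t ≤ T → ∀ ω, Real.exp (-(α t) * Xs t ω) = Lf t ω := by
    intro t h1 h2 ω
    simp only [hXsdef, hLfdef]
    by_cases hc : φ ω ≤ t
    · rw [if_pos hc, if_pos hc, Mv, if_pos (by omega : φ ω ≤ T)]
      have hαt : α t ≠ 0 := (hα t (Finset.mem_Icc.mpr ⟨h1, h2⟩)).ne'
      congr 1
      field_simp
    · rw [if_neg hc, if_neg hc]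
      exact E_gt T a ζ α β h hT hα hβ hhT hposT t h1 h2
  have hZφ : ∀ ω, Zf ω = ζ (φ ω) := by
    intro ω
    rw [hZf ω]
    rcases Nat.lt_or_ge T (φ ω) with hcase | hcase
    · have hφT : φ ω = T + 1 := by have := (hφr ω).2; omega
      have hτT : (T:ℝ) < τ ω := (phif_eq_top_iff T τ ω).mp hφT
      rw [if_pos hτT, hφT]
      have hz : ∀ t ∈ Finset.Icc 1 T,
          (if (t:ℝ) - 1 < τ ω ∧ τ ω ≤ (t:ℝ) then ζ t else 0) = 0 := by
        intro t ht; rw [Finset.mem_Icc] at ht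
        rw [if_neg]
        rintro ⟨_, hle⟩
        have : (t:ℝ) ≤ (T:ℝ) := Nat.cast_le.mpr ht.2
        linarith
      rw [Finset.sum_congr rfl hz, Finset.sum_const_zero, zero_add]
    · have hnotT : ¬ (T:ℝ) < τ ω := by
        intro hcon
        have h5 : φ ω = T + 1 := (phif_eq_top_iff T τ ω).mpr hcon
        omega
      rw [if_neg hnotT, add_zero]
      have hj1 : 1 ≤ φ ω := (hφr ω).1
      rw [Finset.sum_eq_single (φ ω)]
      · rw [if_pos ((phif_eq_iff T τ hτpos (φ ω) hj1 hcase ω).mp rfl)]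
      · intro t ht htne
        rw [Finset.mem_Icc] at ht
        rw [if_neg]
        intro hcon
        exact htne ((phif_eq_iff T τ hτpos t ht.1 ht.2 ω).mpr hcon).symm
      · intro hcon; exact absurd (Finset.mem_Icc.mpr ⟨hj1, hcase⟩) hcon
  have hXsum : ∀ ω, ∑ t ∈ Finset.Icc 1 T, Xs t ω = a - Zf ω := by
    intro ω
    rw [hZφ ω]
    simp only [hXsdef]
    exact sum_Xval T a ζ α β h hT hα hβ (φ ω) (hφr ω).1 (hφr ω).2
  have hXsmeas : ∀ t, t ≤ T → Measurable[ℋ t] (Xs t) := by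
    intro t ht
    have hrep : Xs t = (fun j => if j ≤ t then
        (β j / α t) * (a - ζ j - Sc T a ζ α β h (j - 1)) else gq T a ζ α β h t)
        ∘ (fun ω => min (φ ω) (t+1)) := by
      funext ω
      simp only [hXsdef, Function.comp_apply]
      by_cases hc : φ ω ≤ t
      · rw [if_pos hc, if_pos (by omega : min (φ ω) (t+1) ≤ t),
          show min (φ ω) (t+1) = φ ω by omega]
      · rw [if_neg hc, if_neg (by omega : ¬ min (φ ω) (t+1) ≤ t)]
    rw [hrep]
    exact (measurable_from_top).comp (phit_meas T τ D ℋ hτpos hD hℋ t ht)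
  have hXs_mΩ : ∀ t, Measurable (Xs t) := by
    intro t
    have hrep : Xs t = fun ω => (fun j => if j ≤ t then
        (β j / α t) * (a - ζ j - Sc T a ζ α β h (j - 1)) else gq T a ζ α β h t) (φ ω) := rfl
    rw [hrep]
    exact hφcomp_meas (fun j => if j ≤ t then
      (β j / α t) * (a - ζ j - Sc T a ζ α β h (j - 1)) else gq T a ζ α β h t)
  have hXsbdd : ∀ t, ∀ ω, |Xs t ω| ≤ ∑ j ∈ Finset.range (T+2),
      |if j ≤ t then (β j / α t) * (a - ζ j - Sc T a ζ α β h (j - 1)) else gq T a ζ α β h t| :=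
    fun t ω => hboundφ (fun j => if j ≤ t then
      (β j / α t) * (a - ζ j - Sc T a ζ α β h (j - 1)) else gq T a ζ α β h t) ω
  -- integral of Lf equals Ee 0
  have hKIat : ∀ t, t ≤ T → ∑ j ∈ Finset.Icc (t+1) (T+1), m j * Mv T a ζ α β h j
      = Ee T a ζ α β h t * MG t := by
    intro t ht
    have := KI (T - t) (by omega)
    rwa [show T - (T - t) = t by omega] at this
  have hIL : ∀ t, 1 ≤ t → t ≤ T → ∫ ω, Lf t ω ∂μ = Ee T a ζ α β h 0 := by
    intro t h1 h2
    have hrw : ∫ ω, Lf t ω ∂μ = ∑ j ∈ Finset.range (T+2), m j *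
        (if j ≤ t then Mv T a ζ α β h j else Ee T a ζ α β h t) :=
      integral_comp_nat μ φ hφm (T+1) (fun ω => (hφr ω).2)
        (fun j => if j ≤ t then Mv T a ζ α β h j else Ee T a ζ α β h t)
    rw [hrw]
    have hm00 : m 0 = 0 := by
      have hemp : φ ⁻¹' {0} = ∅ := by
        ext ω; have := (hφr ω).1
        simp only [Set.mem_preimage, Set.mem_singleton_iff, Set.mem_empty_iff_false, iff_false]
        omega
      simp [hmdef, hemp]
    have hstep1 : ∑ j ∈ Finset.range (T+2), m j *
        (if j ≤ t then Mv T a ζ α β h j else Ee T a ζ α β h t)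
        = ∑ j ∈ Finset.Icc 1 (T+1), m j *
        (if j ≤ t then Mv T a ζ α β h j else Ee T a ζ α β h t) := by
      rw [show Finset.range (T+2) = Finset.Icc 0 (T+1) by
        ext k; simp [Finset.mem_Icc, Finset.mem_range]; omega]
      rw [← Finset.sum_subset (Finset.Icc_subset_Icc (by omega) le_rfl)]
      intro x hx hxn
      have : x = 0 := by
        simp only [Finset.mem_Icc] at hx hxn; omega
      rw [this, hm00, zero_mul]
    rw [hstep1]
    have hsplit : ∑ j ∈ Finset.Ioc 0 t, m j *
          (if j ≤ t then Mv T a ζ α β h j else Ee T a ζ α β h t)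
        + ∑ j ∈ Finset.Ioc t (T+1), m j *
          (if j ≤ t then Mv T a ζ α β h j else Ee T a ζ α β h t)
        = ∑ j ∈ Finset.Ioc 0 (T+1), m j *
          (if j ≤ t then Mv T a ζ α β h j else Ee T a ζ α β h t) :=
      Finset.sum_Ioc_consecutive _ (by omega) (by omega)
    rw [show Finset.Icc 1 (T+1) = Finset.Ioc 0 (T+1) by
      ext k; simp [Finset.mem_Icc, Finset.mem_Ioc]; omega, ← hsplit]
    have hpart1 : ∑ j ∈ Finset.Ioc 0 t, m j *
        (if j ≤ t then Mv T a ζ α β h j else Ee T a ζ α β h t)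
        = ∑ j ∈ Finset.Ioc 0 t, m j * Mv T a ζ α β h j := by
      refine Finset.sum_congr rfl fun j hj => ?_
      rw [Finset.mem_Ioc] at hj
      rw [if_pos hj.2]
    have hpart2 : ∑ j ∈ Finset.Ioc t (T+1), m j *
        (if j ≤ t then Mv T a ζ α β h j else Ee T a ζ α β h t)
        = ∑ j ∈ Finset.Ioc t (T+1), m j * Mv T a ζ α β h j := by
      have e1 : ∑ j ∈ Finset.Ioc t (T+1), m j *
          (if j ≤ t then Mv T a ζ α β h j else Ee T a ζ α β h t)
          = ∑ j ∈ Finset.Ioc t (T+1), m j * Ee T a ζ α β h t := by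
        refine Finset.sum_congr rfl fun j hj => ?_
        rw [Finset.mem_Ioc] at hj
        rw [if_neg (by omega)]
      have e2 : ∑ j ∈ Finset.Ioc t (T+1), m j * Ee T a ζ α β h t
          = Ee T a ζ α β h t * MG t := by
        rw [← Finset.sum_mul, hMGdef]
        simp only
        rw [show Finset.Icc (t+1) (T+1) = Finset.Ioc t (T+1) by
          ext k; simp [Finset.mem_Icc, Finset.mem_Ioc]]
        ring
      have e3 := hKIat t h2
      rw [show Finset.Icc (t+1) (T+1) = Finset.Ioc t (T+1) by
        ext k; simp [Finset.mem_Icc, Finset.mem_Ioc]] at e3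
      rw [e1, e2, ← e3]
    have hsplit2 : ∑ j ∈ Finset.Ioc 0 t, m j * Mv T a ζ α β h j
        + ∑ j ∈ Finset.Ioc t (T+1), m j * Mv T a ζ α β h j
        = ∑ j ∈ Finset.Ioc 0 (T+1), m j * Mv T a ζ α β h j :=
      Finset.sum_Ioc_consecutive _ (by omega) (by omega)
    rw [hpart1, hpart2, hsplit2]
    rw [show Finset.Ioc 0 (T+1) = Finset.Icc 1 (T+1) by
      ext k; simp [Finset.mem_Icc, Finset.mem_Ioc]; omega]
    exact KI0
  have hβ1pos : 0 < β 1 := beta_pos T α β hT hα hβ 1 (Finset.mem_Icc.mpr ⟨le_rfl, hT⟩)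
  have hLfint : ∀ t, Integrable (Lf t) μ :=
    fun t => hint_comp (fun j => if j ≤ t then Mv T a ζ α β h j else Ee T a ζ α β h t)
  have hIU : ∀ t, 1 ≤ t → t ≤ T →
      ∫ ω, u t (Xs t ω) ∂μ = (1/α t) * (1 - Ee T a ζ α β h 0) := by
    intro t h1 h2
    have hrwu : (fun ω => u t (Xs t ω)) = fun ω => (1/α t) * (1 - Lf t ω) := by
      funext ω; rw [hu t (Xs t ω), hXsLf t h1 h2 ω]
    rw [hrwu, integral_const_mul]
    congr 1
    rw [integral_sub (integrable_const 1) (hLfint t), integral_const, hIL t h1 h2]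
    simp
  -- the optimal allocation
  set Ystar : ℕ → Ω → ℝ := fun t ω => B t * Xs t ω with hYstardef
  have hALLOC : IsAlloc μ T ℋ (fun t _ => B t) (fun ω => a - Zf ω) Ystar := by
    constructor
    · intro t ht
      rw [Finset.mem_Icc] at ht
      refine ⟨(hXsmeas t ht.2).const_mul (B t),
        |B t| * (∑ j ∈ Finset.range (T+2),
          |if j ≤ t then (β j / α t) * (a - ζ j - Sc T a ζ α β h (j - 1)) else gq T a ζ α β h t|),
        ae_of_all μ fun ω => ?_⟩
      simp only [hYstardef]
      rw [abs_mul]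
      exact mul_le_mul_of_nonneg_left (hXsbdd t ω) (abs_nonneg _)
    · refine ae_of_all μ fun ω => ?_
      have hcongr : ∀ t ∈ Finset.Icc 1 T, Ystar t ω / B t = Xs t ω := by
        intro t htm
        simp only [hYstardef]
        exact mul_div_cancel_left₀ _ (hBpos t htm).ne'
      calc ∑ t ∈ Finset.Icc 1 T, Ystar t ω / B t = ∑ t ∈ Finset.Icc 1 T, Xs t ω :=
            Finset.sum_congr rfl hcongr
        _ = a - Zf ω := hXsum ω
  have hVSTAR : allocVal μ T u (fun t _ => B t) Ystar
      = (1/β 1) * (1 - Ee T a ζ α β h 0) := by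
    have hterm : ∀ t ∈ Finset.Icc 1 T,
        ∫ ω, u t (Ystar t ω / B t) ∂μ = (1/α t) * (1 - Ee T a ζ α β h 0) := by
      intro t ht
      have htm := ht
      rw [Finset.mem_Icc] at ht
      have hcongr : (fun ω => u t (Ystar t ω / B t)) = fun ω => u t (Xs t ω) := by
        funext ω
        simp only [hYstardef]
        rw [mul_div_cancel_left₀ _ (hBpos t htm).ne']
      rw [hcongr]
      exact hIU t ht.1 ht.2
    calc allocVal μ T u (fun t _ => B t) Ystar
        = ∑ t ∈ Finset.Icc 1 T, ∫ ω, u t (Ystar t ω / B t) ∂μ := rfl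
      _ = ∑ t ∈ Finset.Icc 1 T, (1/α t) * (1 - Ee T a ζ α β h 0) :=
            Finset.sum_congr rfl hterm
      _ = (∑ t ∈ Finset.Icc 1 T, 1/α t) * (1 - Ee T a ζ α β h 0) := by
            rw [Finset.sum_mul]
      _ = (1/β 1) * (1 - Ee T a ζ α β h 0) := by
            rw [← hβ 1 (Finset.mem_Icc.mpr ⟨le_rfl, hT⟩)]
  -- tangent inequality
  have htan : ∀ t, 1 ≤ t → t ≤ T → ∀ (x : ℝ) (ω : Ω),
      u t x ≤ u t (Xs t ω) + Lf t ω * (x - Xs t ω) := by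
    intro t h1 h2 x ω
    rw [hu t x, hu t (Xs t ω), ← hXsLf t h1 h2 ω]
    exact tangent_ineq (hα t (Finset.mem_Icc.mpr ⟨h1, h2⟩))
  -- constancy on the survival atom
  have hconst_on : ∀ (f : Ω → ℝ) (t : ℕ), t ≤ T → Measurable[ℋ t] f →
      ∀ ω ω', t+1 ≤ φ ω → t+1 ≤ φ ω' → f ω = f ω' := by
    intro f t ht hf ω ω' hω hω'
    refine comap_nat_const (fun ω => min (φ ω) (t+1)) f
      (hf.mono (filt_le_comap T τ D ℋ hτpos hτmeas hD hℋ t ht) le_rfl) ?_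
    show min (φ ω) (t+1) = min (φ ω') (t+1)
    omega
  -- key duality identity
  have hKEY : ∀ t, 1 ≤ t → t ≤ T → ∀ g : Ω → ℝ, Measurable g → ∀ C : ℝ,
      (∀ᵐ ω ∂μ, |g ω| ≤ C) → (∀ ω ω', t+1 ≤ φ ω → t+1 ≤ φ ω' → g ω = g ω') →
      ∫ ω, Lf t ω * g ω ∂μ = ∫ ω, Mf ω * g ω ∂μ := by
    intro t h1 h2 g hg C hC hconst
    have hi1 : Integrable (fun ω => Lf t ω * g ω) μ :=
      hint_comp_mul (fun j => if j ≤ t then Mv T a ζ α β h j else Ee T a ζ α β h t) g hg C hC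
    have hi2 : Integrable (fun ω => Mf ω * g ω) μ :=
      hint_comp_mul (Mv T a ζ α β h) g hg C hC
    have hdiff : ∫ ω, (Lf t ω - Mf ω) * g ω ∂μ = 0 := by
      have hsupp : ∀ ω ∉ {ω | t+1 ≤ φ ω}, (Lf t ω - Mf ω) * g ω = 0 := by
        intro ω hω
        simp only [Set.mem_setOf_eq, not_le] at hω
        have hle : φ ω ≤ t := by omega
        simp only [hLfdef, hMfdef, if_pos hle, sub_self, zero_mul]
      rw [← setIntegral_eq_integral_of_forall_compl_eq_zero hsupp]
      rcases Set.eq_empty_or_nonempty {ω | t+1 ≤ φ ω} with hemp | ⟨ω₀, hω₀⟩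
      · rw [hemp]; simp
      · have hcg : Set.EqOn (fun ω => (Lf t ω - Mf ω) * g ω)
            (fun ω => (fun j => (Ee T a ζ α β h t - Mv T a ζ α β h j) * g ω₀) (φ ω))
            {ω | t+1 ≤ φ ω} := by
          intro ω hω
          simp only [Set.mem_setOf_eq] at hω
          simp only [hLfdef, hMfdef, if_neg (by omega : ¬ φ ω ≤ t)]
          rw [hconst ω ω₀ hω hω₀]
        rw [setIntegral_congr_fun (hMGmeas t) hcg]
        rw [setIntegral_comp_nat μ φ hφm (T+1) (fun ω => (hφr ω).2)
          (fun j => (Ee T a ζ α β h t - Mv T a ζ α β h j) * g ω₀) (t+1)]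
        have hc : ∀ j ∈ Finset.Icc (t+1) (T+1),
            m j * ((Ee T a ζ α β h t - Mv T a ζ α β h j) * g ω₀)
            = (Ee T a ζ α β h t * g ω₀) * m j - (m j * Mv T a ζ α β h j) * g ω₀ :=
          fun j _ => by ring
        rw [Finset.sum_congr rfl hc, Finset.sum_sub_distrib, ← Finset.mul_sum,
          ← Finset.sum_mul, hKIat t h2]
        have hMGr : ∑ j ∈ Finset.Icc (t+1) (T+1), m j = MG t := rfl
        rw [hMGr]
        ring
    have hsubf : (fun ω => (Lf t ω - Mf ω) * g ω)
        = fun ω => Lf t ω * g ω - Mf ω * g ω := by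
      funext ω; ring
    rw [hsubf, integral_sub hi1 hi2] at hdiff
    linarith
  -- upper bound over all admissible allocations
  have hUB : ∀ Y, IsAlloc μ T ℋ (fun t _ => B t) (fun ω => a - Zf ω) Y →
      allocVal μ T u (fun t _ => B t) Y ≤ (1/β 1) * (1 - Ee T a ζ α β h 0) := by
    intro Y hY
    obtain ⟨hYad, hYsum0⟩ := hY
    set X : ℕ → Ω → ℝ := fun t ω => Y t ω / B t with hXdef
    have hYsum : ∀ᵐ ω ∂μ, ∑ t ∈ Finset.Icc 1 T, X t ω = a - Zf ω := hYsum0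
    have hXfacts : ∀ t ∈ Finset.Icc 1 T, Measurable[ℋ t] (X t) ∧ Measurable (X t) ∧
        ∃ C, ∀ᵐ ω ∂μ, |X t ω| ≤ C := by
      intro t ht
      obtain ⟨hmeas, C, hC⟩ := hYad t ht
      have hm1 : Measurable[ℋ t] (X t) := hmeas.div_const (B t)
      have hm2 : Measurable (X t) := hm1.mono (filt_le τ D ℋ hτmeas hD hℋ t) le_rfl
      refine ⟨hm1, hm2, C / B t, ?_⟩
      filter_upwards [hC] with ω hω
      rw [hXdef]
      simp only
      rw [abs_div, abs_of_pos (hBpos t ht)]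
      gcongr
      exact (hBpos t ht).le
    have hMfXsint : ∀ t, Integrable (fun ω => Mf ω * Xs t ω) μ := fun t =>
      hint_comp_mul (Mv T a ζ α β h) (Xs t) (hXs_mΩ t) _ (ae_of_all μ (hXsbdd t))
    have hterm : ∀ t ∈ Finset.Icc 1 T, ∫ ω, u t (X t ω) ∂μ
        ≤ (1/α t) * (1 - Ee T a ζ α β h 0)
          + (∫ ω, Mf ω * X t ω ∂μ - ∫ ω, Mf ω * Xs t ω ∂μ) := by
      intro t ht
      have ht' := Finset.mem_Icc.mp ht
      obtain ⟨hm1, hm2, C, hC⟩ := hXfacts t ht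
      have hαt := hα t ht
      have hLfX : Integrable (fun ω => Lf t ω * X t ω) μ :=
        hint_comp_mul (fun j => if j ≤ t then Mv T a ζ α β h j else Ee T a ζ α β h t)
          (X t) hm2 C hC
      have hLfXs : Integrable (fun ω => Lf t ω * Xs t ω) μ :=
        hint_comp_mul (fun j => if j ≤ t then Mv T a ζ α β h j else Ee T a ζ α β h t)
          (Xs t) (hXs_mΩ t) _ (ae_of_all μ (hXsbdd t))
      have hUXs : Integrable (fun ω => u t (Xs t ω)) μ := by
        have hrwu : (fun ω => u t (Xs t ω)) = fun ω => (1/α t) * (1 - Lf t ω) := by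
          funext ω; rw [hu t (Xs t ω), hXsLf t ht'.1 ht'.2 ω]
        rw [hrwu]
        exact ((integrable_const 1).sub (hLfint t)).const_mul _
      have hUX : Integrable (fun ω => u t (X t ω)) μ := by
        have hrwu : (fun ω => u t (X t ω))
            = fun ω => (1/α t) * (1 - Real.exp (-(α t) * X t ω)) := by
          funext ω; rw [hu]
        rw [hrwu]
        have hmeasu : Measurable (fun ω => (1/α t) * (1 - Real.exp (-(α t) * X t ω))) :=
          (measurable_const.sub (Real.measurable_exp.comp (hm2.const_mul (-(α t))))).const_mul _
        refine integrable_of_ae_bound hmeasu.aestronglyMeasurable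
          (C := (1/α t) * (1 + Real.exp (α t * C))) ?_
        filter_upwards [hC] with ω hω
        obtain ⟨hω1, hω2⟩ := abs_le.mp hω
        have he : 0 < Real.exp (-(α t) * X t ω) := Real.exp_pos _
        have heE : Real.exp (-(α t) * X t ω) ≤ Real.exp (α t * C) :=
          Real.exp_le_exp.mpr (by nlinarith)
        have hE0 : 0 < Real.exp (α t * C) := Real.exp_pos _
        rw [abs_mul, abs_of_pos (by positivity : (0:ℝ) < 1/α t)]
        refine mul_le_mul_of_nonneg_left (abs_le.mpr ⟨by nlinarith, by nlinarith⟩)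
          (by positivity)
      have hint2 : Integrable (fun ω => u t (Xs t ω) + Lf t ω * (X t ω - Xs t ω)) μ := by
        have hre : (fun ω => u t (Xs t ω) + Lf t ω * (X t ω - Xs t ω))
            = fun ω => u t (Xs t ω) + (Lf t ω * X t ω - Lf t ω * Xs t ω) := by
          funext ω; ring
        rw [hre]
        exact hUXs.add (hLfX.sub hLfXs)
      have hmono : ∫ ω, u t (X t ω) ∂μ
          ≤ ∫ ω, (u t (Xs t ω) + Lf t ω * (X t ω - Xs t ω)) ∂μ :=
        integral_mono hUX hint2 (fun ω => htan t ht'.1 ht'.2 (X t ω) ω)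
      have heq2 : ∫ ω, (u t (Xs t ω) + Lf t ω * (X t ω - Xs t ω)) ∂μ
          = (1/α t) * (1 - Ee T a ζ α β h 0)
            + (∫ ω, Mf ω * X t ω ∂μ - ∫ ω, Mf ω * Xs t ω ∂μ) := by
        rw [show (fun ω => u t (Xs t ω) + Lf t ω * (X t ω - Xs t ω))
            = fun ω => u t (Xs t ω) + (Lf t ω * X t ω - Lf t ω * Xs t ω)
          from funext fun ω => by ring]
        have hsubint : Integrable (fun ω => Lf t ω * X t ω - Lf t ω * Xs t ω) μ :=
          hLfX.sub hLfXs
        rw [integral_add hUXs hsubint, integral_sub hLfX hLfXs,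
          hIU t ht'.1 ht'.2,
          hKEY t ht'.1 ht'.2 (X t) hm2 C hC (hconst_on (X t) t ht'.2 hm1),
          hKEY t ht'.1 ht'.2 (Xs t) (hXs_mΩ t) _ (ae_of_all μ (hXsbdd t))
            (hconst_on (Xs t) t ht'.2 (hXsmeas t ht'.2))]
      exact le_trans hmono (le_of_eq heq2)
    have hAV : allocVal μ T u (fun t _ => B t) Y
        = ∑ t ∈ Finset.Icc 1 T, ∫ ω, u t (X t ω) ∂μ := rfl
    rw [hAV]
    refine le_trans (Finset.sum_le_sum hterm) ?_
    rw [Finset.sum_add_distrib]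
    have hpart1 : ∑ t ∈ Finset.Icc 1 T, (1/α t) * (1 - Ee T a ζ α β h 0)
        = (1/β 1) * (1 - Ee T a ζ α β h 0) := by
      rw [← Finset.sum_mul, ← hβ 1 (Finset.mem_Icc.mpr ⟨le_rfl, hT⟩)]
    have hMfXint : ∀ t ∈ Finset.Icc 1 T, Integrable (fun ω => Mf ω * X t ω) μ := by
      intro t ht
      obtain ⟨_, hm2, C, hC⟩ := hXfacts t ht
      exact hint_comp_mul (Mv T a ζ α β h) (X t) hm2 C hC
    have hzero : ∑ t ∈ Finset.Icc 1 T,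
        (∫ ω, Mf ω * X t ω ∂μ - ∫ ω, Mf ω * Xs t ω ∂μ) = 0 := by
      rw [Finset.sum_sub_distrib]
      have e1 : ∑ t ∈ Finset.Icc 1 T, ∫ ω, Mf ω * X t ω ∂μ
          = ∫ ω, Mf ω * (a - Zf ω) ∂μ := by
        rw [← integral_finset_sum _ hMfXint]
        apply integral_congr_ae
        filter_upwards [hYsum] with ω hω
        show ∑ t ∈ Finset.Icc 1 T, Mf ω * X t ω = Mf ω * (a - Zf ω)
        rw [← Finset.mul_sum, hω]
      have e2 : ∑ t ∈ Finset.Icc 1 T, ∫ ω, Mf ω * Xs t ω ∂μ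
          = ∫ ω, Mf ω * (a - Zf ω) ∂μ := by
        rw [← integral_finset_sum _ (fun t _ => hMfXsint t)]
        apply integral_congr_ae
        apply ae_of_all
        intro ω
        show ∑ t ∈ Finset.Icc 1 T, Mf ω * Xs t ω = Mf ω * (a - Zf ω)
        rw [← Finset.mul_sum, hXsum ω]
      rw [e1, e2, sub_self]
    rw [hpart1, hzero, add_zero]
  -- conclusion
  have hset : Util μ T ℋ u (fun t _ => B t) (fun ω => a - Zf ω)
      = sSup {s : ℝ | ∃ Y, IsAlloc μ T ℋ (fun t _ => B t) (fun ω => a - Zf ω) Y ∧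
          s = allocVal μ T u (fun t _ => B t) Y} := rfl
  rw [hset]
  apply IsGreatest.csSup_eq
  constructor
  · exact ⟨Ystar, hALLOC, hVSTAR.symm⟩
  · rintro s ⟨Y, hY, rfl⟩
    exact hUB Y hY


/-- Premium formula (Theorem 4.3(a)): under exponential utility, deterministic
interest rates (R) and the death-time filtration (F), the indifference price of
`Z = ∑_{t=1}^T z_t 1_{(t-1 < τ ≤ t)} + z_{T+1} 1_{(T < τ)}` is `H(Z) = log h₀`. -/
theorem insurance_indifference_premium
    {Ω : Type*} [mΩ : MeasurableSpace Ω] (μ : Measure Ω) [IsProbabilityMeasure μ]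
    (T : ℕ) (hT : 1 ≤ T)
    (τ : Ω → ℝ) (hτmeas : Measurable τ) (hτpos : ∀ ω, 0 < τ ω)
    (hτcont : ∀ s : ℝ, 0 ≤ s → μ {ω | τ ω = s} = 0)
    (D : ℕ → Ω → ℝ) (hD : ∀ t ω, D t ω = if τ ω ≤ (t : ℝ) then 1 else 0)
    (ℋ : ℕ → MeasurableSpace Ω)
    (hℋ : ∀ t, ℋ t =
      ⨆ s ∈ Finset.range (t + 1), MeasurableSpace.comap (D s) (inferInstance : MeasurableSpace ℝ))
    (q p : ℕ → ℝ)
    (hsurv : ∀ t, t < T → 0 < μ {ω | (t : ℝ) < τ ω})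
    (hq : ∀ t, t < T → q t =
      (μ {ω | (t : ℝ) < τ ω ∧ τ ω ≤ (t : ℝ) + 1}).toReal / (μ {ω | (t : ℝ) < τ ω}).toReal)
    (hp : ∀ t, t < T → p t = 1 - q t)
    (α β : ℕ → ℝ) (hα : ∀ t ∈ Finset.Icc 1 T, 0 < α t)
    (hβ : ∀ t ∈ Finset.Icc 1 T, 1 / β t = ∑ k ∈ Finset.Icc t T, 1 / α k)
    -- condition (R): deterministic, nonnegative interest rates
    (r : ℕ → ℝ) (hr_nonneg : ∀ t ∈ Finset.Icc 1 T, 0 ≤ r t)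
    (B : ℕ → ℝ) (hB : ∀ t, B t = ∏ k ∈ Finset.Icc 1 t, (1 + r k))
    -- exponential utility
    (u : ℕ → ℝ → ℝ)
    (hu : ∀ t x, u t x = (1 / α t) * (1 - Real.exp (-(α t) * x)))
    (z : ℕ → ℝ) (Z : Ω → ℝ)
    (hZ : ∀ ω, Z ω =
      (∑ t ∈ Finset.Icc 1 T, if (t : ℝ) - 1 < τ ω ∧ τ ω ≤ (t : ℝ) then z t else 0) +
      (if (T : ℝ) < τ ω then z (T + 1) else 0))
    (h : ℕ → ℝ)
    (hhT : h T = Real.exp (z (T + 1)))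
    (hhstep : ∀ t ∈ Finset.Icc 1 T,
      h (t - 1) = (Real.exp (β t * z t) * q (t - 1) + (h t) ^ (β t) * p (t - 1)) ^ (1 / β t))
    (w H : ℝ)
    (hH : Util μ T ℋ u (fun t _ => B t) (fun ω => w + H - Z ω) =
      Util μ T ℋ u (fun t _ => B t) (fun _ => w)) :
    H = Real.log (h 0) := by
  have hβ1pos : 0 < β 1 := beta_pos T α β hT hα hβ 1 (Finset.mem_Icc.mpr ⟨le_rfl, hT⟩)
  have hBpos : ∀ t ∈ Finset.Icc 1 T, 0 < B t := by
    intro t ht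
    rw [Finset.mem_Icc] at ht
    rw [hB t]
    apply Finset.prod_pos
    intro k hk
    rw [Finset.mem_Icc] at hk
    have : 0 ≤ r k := hr_nonneg k (Finset.mem_Icc.mpr ⟨hk.1, le_trans hk.2 ht.2⟩)
    linarith
  -- positivity of h
  have hq0 : ∀ s, s < T → 0 ≤ q s := by
    intro s hs; rw [hq s hs]; positivity
  have hqle : ∀ s, s < T → q s ≤ 1 := by
    intro s hs
    rw [hq s hs]
    have hmono : μ {ω | (s : ℝ) < τ ω ∧ τ ω ≤ (s : ℝ) + 1} ≤ μ {ω | (s : ℝ) < τ ω} :=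
      measure_mono (fun ω hω => hω.1)
    have hpos0 : 0 < (μ {ω | (s : ℝ) < τ ω}).toReal :=
      ENNReal.toReal_pos (hsurv s hs).ne' (measure_ne_top μ _)
    rw [div_le_one hpos0]
    exact ENNReal.toReal_mono (measure_ne_top μ _) hmono
  have hp0 : ∀ s, s < T → 0 ≤ p s := by
    intro s hs; rw [hp s hs]; linarith [hqle s hs]
  have hqp1 : ∀ s, s < T → q s + p s = 1 := by
    intro s hs; rw [hp s hs]; ring
  have hposT : ∀ t, t ≤ T → 0 < h t := h_pos T z α β h q p hT hα hβ hq0 hp0 hqp1 hhT hhstep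
  have hpos0 : 0 < h 0 := hposT 0 (by omega)
  -- utility of w + H - Z
  have hU1 := utilFormula μ T hT τ hτmeas hτpos D hD ℋ hℋ q p hsurv hq hp α β hα hβ
    B hBpos u hu z Z hZ h hhT hhstep (w + H)
  have hE1 : Ee T (w + H) z α β h 0 = Real.exp (-(β 1) * (w + H)) * (h 0) ^ (β 1) := by
    rw [Ee, if_neg (by omega)]
    norm_num [Sc]
  -- utility of the constant w
  have hU2 := utilFormula μ T hT τ hτmeas hτpos D hD ℋ hℋ q p hsurv hq hp α β hα hβ
    B hBpos u hu (fun _ => 0) (fun _ => 0)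
    (by intro ω; simp) (fun _ => 1) (by simp)
    (by
      intro t ht
      rw [Finset.mem_Icc] at ht
      have := hqp1 (t-1) (by omega)
      rw [Real.one_rpow, mul_zero, Real.exp_zero, one_mul, one_mul, this, Real.one_rpow])
    w
  have hE2 : Ee T w (fun _ => 0) α β (fun _ => 1) 0 = Real.exp (-(β 1) * w) := by
    rw [Ee, if_neg (by omega)]
    norm_num [Sc]
  rw [hE1] at hU1
  rw [hE2] at hU2
  have hW1 : (fun ω => w + H - Z ω) = (fun ω => w + H - Z ω) := rfl
  have hW2 : (fun ω : Ω => w - (fun _ : Ω => (0:ℝ)) ω) = (fun _ : Ω => w) := by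
    funext ω; simp
  rw [hW2] at hU2
  rw [hU1, hU2] at hH
  -- cancel and take logarithms
  have hc1 := mul_left_cancel₀ (one_div_ne_zero hβ1pos.ne') hH
  have hc2 : Real.exp (-(β 1) * (w + H)) * (h 0) ^ (β 1) = Real.exp (-(β 1) * w) := by
    linarith
  have hc3 := congrArg Real.log hc2
  rw [Real.log_mul (Real.exp_ne_zero _) (Real.rpow_pos_of_pos hpos0 _).ne',
    Real.log_exp, Real.log_exp, Real.log_rpow hpos0] at hc3
  have : β 1 * H = β 1 * Real.log (h 0) := by linarith
  exact mul_left_cancel₀ hβ1pos.ne' this
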